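/- The number of codewords of weight w in an MDS code [n, k, d] over GF(q), for d ≤ w ≤ n, equals A_w = C(n,w) · (q-1) · Σ_{j=0}^{w-d} (-1)^j C(w-1, j) q^{w-d-j}, where d = n-k+1. -/

import Mathlib

set_option maxHeartbeats 1000000
set_option synthInstance.maxHeartbeats 1000000

open Finset

lemma aux_partial (w m : ℕ) (hw : 1 ≤ w) :
    ∑ j ∈ range (m+1), (-1:ℤ)^j * (w.choose j : ℤ) = (-1)^m * ((w-1).choose m : ℤ) := by
  induction m with
  | zero => simp
  | succ m ih =>
    rw [Finset.sum_range_succ, ih]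
    obtain ⟨v, rfl⟩ : ∃ v, w = v + 1 := ⟨w - 1, by omega⟩
    simp only [Nat.add_sub_cancel]
    rw [Nat.choose_succ_succ v m]
    push_cast
    ring

lemma aux_ident (w s : ℕ) (hw : 1 ≤ w) (hs : s + 1 ≤ w) (q : ℤ) :
    ∑ j ∈ range (s+1), (-1:ℤ)^j * (w.choose j : ℤ) * (q^(s+1-j) - 1) =
      (q - 1) * ∑ j ∈ range (s+1), (-1:ℤ)^j * ((w-1).choose j : ℤ) * q^(s-j) := by
  induction s with
  | zero => simp
  | succ s ih =>
    have ih' := ih (by omega)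
    have h1 : ∑ j ∈ range (s+1+1), (-1:ℤ)^j * (w.choose j : ℤ) * (q^(s+1+1-j) - 1)
        = q * (∑ j ∈ range (s+1), (-1:ℤ)^j * (w.choose j : ℤ) * (q^(s+1-j) - 1))
          + (q - 1) * ∑ j ∈ range (s+1+1), (-1:ℤ)^j * (w.choose j : ℤ) := by
      rw [Finset.sum_range_succ, Finset.sum_range_succ (f := fun j => (-1:ℤ)^j * (w.choose j : ℤ))]
      have e1 : ∀ j ∈ range (s+1), (-1:ℤ)^j * (w.choose j : ℤ) * (q^(s+1+1-j) - 1)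
          = q * ((-1:ℤ)^j * (w.choose j : ℤ) * (q^(s+1-j) - 1)) + (q - 1) * ((-1)^j * (w.choose j : ℤ)) := by
        intro j hj
        rw [mem_range] at hj
        rw [show s + 1 + 1 - j = (s + 1 - j) + 1 by omega, pow_succ]
        ring
      rw [Finset.sum_congr rfl e1, Finset.sum_add_distrib, ← Finset.mul_sum, ← Finset.mul_sum,
        show s+1+1-(s+1) = 1 by omega]
      ring
    have h2 : ∑ j ∈ range (s+1+1), (-1:ℤ)^j * ((w-1).choose j : ℤ) * q^(s+1-j)
        = q * (∑ j ∈ range (s+1), (-1:ℤ)^j * ((w-1).choose j : ℤ) * q^(s-j))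
          + (-1)^(s+1) * ((w-1).choose (s+1) : ℤ) := by
      rw [Finset.sum_range_succ]
      have e2 : ∀ j ∈ range (s+1), (-1:ℤ)^j * ((w-1).choose j : ℤ) * q^(s+1-j)
          = q * ((-1:ℤ)^j * ((w-1).choose j : ℤ) * q^(s-j)) := by
        intro j hj
        rw [mem_range] at hj
        rw [show s + 1 - j = (s - j) + 1 by omega, pow_succ]
        ring
      rw [Finset.sum_congr rfl e2, ← Finset.mul_sum, show s+1-(s+1) = 0 by omega]
      ring
    rw [h1, h2, ih', aux_partial w (s+1) hw]
    ring

lemma aux_full (w d : ℕ) (hd : 1 ≤ d) (hdw : d ≤ w) (q : ℤ) :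
    ∑ i ∈ range (w+1), (-1:ℤ)^(w-i) * (w.choose i : ℤ) * q^(i-(d-1)) =
      (q - 1) * ∑ j ∈ range (w-d+1), (-1:ℤ)^j * ((w-1).choose j : ℤ) * q^(w-d-j) := by
  set s := w - d with hs
  have h1 : ∑ i ∈ range (w+1), (-1:ℤ)^(w-i) * (w.choose i : ℤ) * q^(i-(d-1))
      = ∑ j ∈ range (w+1), (-1:ℤ)^j * (w.choose j : ℤ) * q^(s+1-j) := by
    rw [← Finset.sum_range_reflect (fun j => (-1:ℤ)^j * (w.choose j : ℤ) * q^(s+1-j)) (w+1)]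
    refine Finset.sum_congr rfl fun i hi => ?_
    rw [mem_range] at hi
    rw [show w + 1 - 1 - i = w - i by omega, Nat.choose_symm (by omega : i ≤ w)]
    congr 1
    congr 1
    omega
  have h2 : ∑ j ∈ range (w+1), (-1:ℤ)^j * (w.choose j : ℤ) * q^(s+1-j)
      = ∑ j ∈ range (s+1), (-1:ℤ)^j * (w.choose j : ℤ) * (q^(s+1-j) - 1) := by
    have hsplit := Finset.sum_range_add (fun j => (-1:ℤ)^j * (w.choose j : ℤ) * q^(s+1-j)) (s+1) (w - s)
    rw [show s + 1 + (w - s) = w + 1 by omega] at hsplit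
    rw [hsplit]
    have htail : ∑ j ∈ range (w - s), (-1:ℤ)^(s+1+j) * (w.choose (s+1+j) : ℤ) * q^(s+1-(s+1+j))
        = ∑ j ∈ range (w - s), (-1:ℤ)^(s+1+j) * (w.choose (s+1+j) : ℤ) := by
      refine Finset.sum_congr rfl fun j hj => ?_
      rw [show s+1-(s+1+j) = 0 by omega, pow_zero, mul_one]
    rw [htail]
    have hall : (∑ j ∈ range (s+1), (-1:ℤ)^j * (w.choose j : ℤ))
        + ∑ j ∈ range (w - s), (-1:ℤ)^(s+1+j) * (w.choose (s+1+j) : ℤ) = 0 := by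
      have h0 := Int.alternating_sum_range_choose_of_ne (by omega : w ≠ 0)
      have hsplit2 := Finset.sum_range_add (fun j => (-1:ℤ)^j * (w.choose j : ℤ)) (s+1) (w - s)
      rw [show s + 1 + (w - s) = w + 1 by omega] at hsplit2
      rw [← hsplit2, h0]
    have : ∑ j ∈ range (w - s), (-1:ℤ)^(s+1+j) * (w.choose (s+1+j) : ℤ)
        = - ∑ j ∈ range (s+1), (-1:ℤ)^j * (w.choose j : ℤ) := by linarith
    rw [this, ← sub_eq_add_neg, ← Finset.sum_sub_distrib]
    refine Finset.sum_congr rfl fun j hj => ?_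
    ring
  rw [h1, h2]
  exact aux_ident w s (by omega) (by omega) q

lemma aux_norm_le {F : Type*} [DecidableEq F] [Zero F] {n : ℕ} {c : Fin n → F}
    {S : Finset (Fin n)} (h : ∀ i ∉ S, c i = 0) : hammingNorm c ≤ S.card := by
  refine Finset.card_le_card fun i hi => ?_
  rw [Finset.mem_filter] at hi
  by_contra hiS
  exact hi.2 (h i hiS)

lemma aux_count (q n k d : ℕ) (F : Type*) [Field F] [Fintype F] [DecidableEq F]
    (hcard : Fintype.card F = q)
    (C : Submodule F (Fin n → F)) (hk : Module.finrank F C = k) (hkn : k ≤ n)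
    (hdn : d = n - k + 1)
    (hlb : ∀ c ∈ C, c ≠ 0 → d ≤ hammingNorm c)
    (S : Finset (Fin n)) :
    Nat.card {c : Fin n → F // c ∈ C ∧ ∀ i ∉ S, c i = 0} = q ^ (S.card - (d - 1)) := by
  classical
  set m := S.card with hm
  have hmn : m ≤ n := by simpa [hm] using (Finset.card_le_card (Finset.subset_univ S)).trans_eq (by simp)
  -- the submodule of codewords supported in S
  set D : Submodule F (Fin n → F) :=
    C ⊓ LinearMap.ker (LinearMap.funLeft F F (fun i : {i : Fin n // i ∉ S} => (i : Fin n))) with hD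
  have hmemD : ∀ c : Fin n → F, c ∈ D ↔ (c ∈ C ∧ ∀ i ∉ S, c i = 0) := by
    intro c
    simp only [hD, Submodule.mem_inf, LinearMap.mem_ker]
    constructor
    · rintro ⟨h1, h2⟩
      refine ⟨h1, fun i hi => ?_⟩
      have := congrFun h2 ⟨i, hi⟩
      simpa [LinearMap.funLeft_apply] using this
    · rintro ⟨h1, h2⟩
      refine ⟨h1, funext fun i => ?_⟩
      simpa [LinearMap.funLeft_apply] using h2 i.1 i.2
  clear_value D
  clear hD
  -- D is trivial when S is small
  have hDbot : m < d → D = ⊥ := by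
    intro hsmall
    rw [Submodule.eq_bot_iff]
    intro c hc
    rw [hmemD] at hc
    by_contra hc0
    exact absurd ((hlb c hc.1 hc0).trans (aux_norm_le hc.2)) (by omega)
  -- finrank of D
  have hrankD : Module.finrank F D = m - (d - 1) := by
    rcases lt_or_ge m (d-1+1) with hsmall | hbig
    · rw [hDbot (by omega)]
      simp only [finrank_bot]
      omega
    · -- upper bound
      obtain ⟨S', hS'sub, hS'card⟩ := Finset.exists_subset_card_eq (show m - (d-1) ≤ S.card by omega)
      have hupper : Module.finrank F D ≤ m - (d - 1) := by
        have hinj : Function.Injective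
            ((LinearMap.funLeft F F (fun i : {i : Fin n // i ∈ S'} => (i : Fin n))).comp D.subtype) := by
          rw [← LinearMap.ker_eq_bot, Submodule.eq_bot_iff]
          intro c hc
          rw [LinearMap.mem_ker] at hc
          have hzS' : ∀ i ∈ S', c.1 i = 0 := fun i hi => congrFun hc ⟨i, hi⟩
          have hcD := (hmemD c.1).1 c.2
          have hsupp : ∀ i ∉ S \ S', c.1 i = 0 := by
            intro i hi
            rw [Finset.mem_sdiff] at hi
            by_cases hiS : i ∈ S
            · exact hzS' i (by tauto)
            · exact hcD.2 i hiS
          have hcard' : (S \ S').card = d - 1 := by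
            rw [Finset.card_sdiff_of_subset hS'sub, hS'card]
            omega
          have hle := aux_norm_le hsupp
          rw [hcard'] at hle
          ext1
          by_contra hc0
          exact absurd ((hlb c.1 hcD.1 hc0).trans hle) (by omega)
        have := LinearMap.finrank_le_finrank_of_injective hinj
        rwa [Module.finrank_fintype_fun_eq_card, Fintype.card_coe, hS'card] at this
      -- lower bound
      have hlower : k ≤ (n - m) + Module.finrank F D := by
        set ψ := (LinearMap.funLeft F F (fun i : {i : Fin n // i ∉ S} => (i : Fin n))).comp C.subtype with hψ
        have hker : LinearMap.ker ψ = D.comap C.subtype := by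
          ext c
          simp only [LinearMap.mem_ker, Submodule.mem_comap, hψ, LinearMap.comp_apply, hmemD]
          constructor
          · intro h
            refine ⟨c.2, fun i hi => congrFun h ⟨i, hi⟩⟩
          · rintro ⟨-, h2⟩
            exact funext fun i => h2 i.1 i.2
        clear_value ψ
        have hrn := LinearMap.finrank_range_add_finrank_ker ψ
        rw [hk, hker] at hrn
        have hDle : D ≤ C := fun c hc => ((hmemD c).1 hc).1
        have hcomap : Module.finrank F (D.comap C.subtype) = Module.finrank F D :=
          (Submodule.comapSubtypeEquivOfLe hDle).finrank_eq
        have hrange : Module.finrank F (LinearMap.range ψ) ≤ n - m := by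
          have h1 := Submodule.finrank_le (LinearMap.range ψ)
          rw [Module.finrank_fintype_fun_eq_card] at h1
          have h2 : Fintype.card {i : Fin n // i ∉ S} = n - m := by
            simp [Fintype.card_subtype_compl, hm]
          omega
        omega
      omega
  -- cardinality
  have hcardD : Nat.card D = q ^ (m - (d-1)) := by
    rw [Nat.card_eq_fintype_card, Module.card_eq_pow_finrank (K := F), hcard, hrankD]
  rw [← hcardD]
  exact Nat.card_congr (Equiv.subtypeEquivRight fun c => (hmemD c).symm)

lemma aux_neg_pow (a b : ℕ) (h : b ≤ a) : (-1:ℤ)^(a-b) = (-1)^a * (-1)^b := by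
  obtain ⟨c, rfl⟩ : ∃ c, a = b + c := ⟨a - b, by omega⟩
  rw [show b + c - b = c by omega, pow_add]
  have : (-1:ℤ)^b * (-1)^b = 1 := by rw [← mul_pow]; norm_num
  calc (-1:ℤ)^c = ((-1:ℤ)^b * (-1)^b) * (-1)^c := by rw [this, one_mul]
    _ = (-1:ℤ)^b * (-1)^c * (-1)^b := by ring

-- Möbius inversion step, abstract over the cards
lemma aux_mobius {α : Type*} [DecidableEq α] (S : Finset α) (Ecard : Finset α → ℤ)
    (Ncard : Finset α → ℤ) (hN : ∀ R ⊆ S, Ncard R = ∑ T ∈ R.powerset, Ecard T) :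
    Ecard S = ∑ R ∈ S.powerset, (-1:ℤ)^(S.card - R.card) * Ncard R := by
  have step1 : ∀ R ∈ S.powerset, (-1:ℤ)^(S.card - R.card) * Ncard R
      = ∑ T ∈ S.powerset, if T ⊆ R then (-1:ℤ)^(S.card - R.card) * Ecard T else 0 := by
    intro R hR
    rw [mem_powerset] at hR
    rw [sum_ite, sum_const_zero, add_zero, hN R hR, mul_sum]
    congr 1
    ext T
    simp only [mem_filter, mem_powerset]
    exact ⟨fun h => ⟨h.trans hR, h⟩, fun h => h.2⟩
  rw [Finset.sum_congr rfl step1, Finset.sum_comm]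
  have step2 : ∀ T ∈ S.powerset,
      (∑ R ∈ S.powerset, if T ⊆ R then (-1:ℤ)^(S.card - R.card) * Ecard T else 0)
      = if T = S then Ecard S else 0 := by
    intro T hT
    rw [mem_powerset] at hT
    rw [← Finset.sum_filter]
    have hbij : ∑ R ∈ S.powerset.filter (T ⊆ ·), (-1:ℤ)^(S.card - R.card) * Ecard T
        = ∑ U ∈ (S \ T).powerset, (-1:ℤ)^(S.card - (U ∪ T).card) * Ecard T := by
      refine Finset.sum_bij' (fun R _ => R \ T) (fun U _ => U ∪ T) ?_ ?_ ?_ ?_ ?_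
      · intro R hR
        simp only [mem_filter, mem_powerset] at hR
        rw [mem_powerset]
        exact Finset.sdiff_subset_sdiff hR.1 le_rfl
      · intro U hU
        rw [mem_powerset] at hU
        simp only [mem_filter, mem_powerset]
        exact ⟨Finset.union_subset (hU.trans (Finset.sdiff_subset)) hT, Finset.subset_union_right⟩
      · intro R hR
        simp only [mem_filter, mem_powerset] at hR
        exact Finset.sdiff_union_of_subset hR.2
      · intro U hU
        rw [mem_powerset] at hU
        exact Finset.union_sdiff_cancel_right
          (Finset.disjoint_left.2 fun a haU haT => (Finset.mem_sdiff.1 (hU haU)).2 haT)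
      · intro R hR
        simp only [mem_filter, mem_powerset] at hR
        rw [Finset.sdiff_union_of_subset hR.2]
    rw [hbij]
    have hterm : ∀ U ∈ (S \ T).powerset, (-1:ℤ)^(S.card - (U ∪ T).card) * Ecard T
        = ((-1:ℤ)^(S.card) * (-1:ℤ)^(T.card) * Ecard T) * (-1:ℤ)^(U.card) := by
      intro U hU
      rw [mem_powerset] at hU
      have hdisj : Disjoint U T :=
        Finset.disjoint_left.2 fun a haU haT => (Finset.mem_sdiff.1 (hU haU)).2 haT
      have hUsub : U ∪ T ⊆ S := Finset.union_subset (hU.trans Finset.sdiff_subset) hT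
      rw [aux_neg_pow _ _ (Finset.card_le_card hUsub), Finset.card_union_of_disjoint hdisj, pow_add]
      ring
    rw [Finset.sum_congr rfl hterm, ← Finset.mul_sum, Finset.sum_powerset_neg_one_pow_card]
    by_cases hTS : T = S
    · subst hTS
      rw [if_pos (by simp), if_pos rfl]
      have h1 : (-1:ℤ)^(#T) * (-1:ℤ)^(#T) = 1 := by rw [← mul_pow]; norm_num
      rw [mul_one, h1, one_mul]
    · rw [if_neg hTS, if_neg, mul_zero]
      intro hempty
      exact hTS (subset_antisymm hT (Finset.sdiff_eq_empty_iff_subset.1 hempty))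
  rw [Finset.sum_congr rfl step2, Finset.sum_ite_eq' S.powerset S (fun _ => Ecard S),
    if_pos (Finset.mem_powerset.2 le_rfl)]

noncomputable def minDist {F : Type*} [Field F] [Fintype F] [DecidableEq F] {n : ℕ}
    (C : Submodule F (Fin n → F)) : ℕ :=
  sInf {w | ∃ c ∈ C, c ≠ 0 ∧ hammingNorm c = w}

theorem stmt_7 (q n k d : ℕ) (F : Type*) [Field F] [Fintype F] [DecidableEq F]
    (hcard : Fintype.card F = q)
    (C : Submodule F (Fin n → F)) (hk : Module.finrank F C = k)
    (hd : d = n - k + 1) (hmin : minDist C = d)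
    (w : ℕ) (hw1 : d ≤ w) (hw2 : w ≤ n) :
    ({c : Fin n → F | c ∈ C ∧ hammingNorm c = w}.ncard : ℤ) =
      (n.choose w : ℤ) * ((q : ℤ) - 1) *
        ∑ j ∈ Finset.range (w - d + 1),
          (-1) ^ j * ((w - 1).choose j : ℤ) * (q : ℤ) ^ (w - d - j) := by
  classical
  have hkn : k ≤ n := by
    have h1 := Submodule.finrank_le C
    rwa [hk, Module.finrank_fintype_fun_eq_card, Fintype.card_fin] at h1
  have hlb : ∀ c ∈ C, c ≠ 0 → d ≤ hammingNorm c := fun c hc h0 =>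
    hmin ▸ Nat.sInf_le ⟨c, hc, h0, rfl⟩
  set suppF : (Fin n → F) → Finset (Fin n) := fun c => {i | c i ≠ 0} with hsupp
  have hnorm : ∀ c : Fin n → F, hammingNorm c = (suppF c).card := fun c => rfl
  set E : Finset (Fin n) → Finset (Fin n → F) :=
    fun S => Finset.univ.filter (fun c => c ∈ C ∧ suppF c = S) with hE
  set N : Finset (Fin n) → Finset (Fin n → F) :=
    fun R => Finset.univ.filter (fun c => c ∈ C ∧ ∀ i ∉ R, c i = 0) with hNdef
  have hsub : ∀ (c : Fin n → F) (R : Finset (Fin n)), (suppF c ⊆ R) ↔ ∀ i ∉ R, c i = 0 := by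
    intro c R
    constructor
    · intro h i hi
      by_contra h0
      exact hi (h (by simp [hsupp, h0]))
    · intro h i hi
      simp only [hsupp, mem_filter, mem_univ, true_and] at hi
      by_contra hiR
      exact hi (h i hiR)
  -- N = sum of E over subsets
  have hNE : ∀ R : Finset (Fin n), (N R).card = ∑ T ∈ R.powerset, (E T).card := by
    intro R
    rw [Finset.card_eq_sum_card_fiberwise (f := suppF) (t := R.powerset)
      (fun c hc => by
        simp only [hNdef, Finset.mem_coe, mem_filter] at hc
        exact Finset.mem_powerset.2 ((hsub c R).2 hc.2.2))]
    refine Finset.sum_congr rfl fun T hT => ?_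
    rw [mem_powerset] at hT
    congr 1
    ext c
    simp only [hNdef, hE, Finset.mem_filter, mem_univ, true_and]
    constructor
    · tauto
    · rintro ⟨h1, h2⟩
      exact ⟨⟨h1, (hsub c R).1 (h2 ▸ hT)⟩, h2⟩
  -- N card formula
  have hNcard : ∀ R : Finset (Fin n), ((N R).card : ℤ) = (q:ℤ) ^ (R.card - (d-1)) := by
    intro R
    have h1 := aux_count q n k d F hcard C hk hkn hd hlb R
    have h2 : (N R).card = Nat.card {c : Fin n → F // c ∈ C ∧ ∀ i ∉ R, c i = 0} := by
      rw [Nat.card_eq_fintype_card, Fintype.card_subtype]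
    rw [h2, h1]
    push_cast
    rfl
  -- the weight-w words
  set A : Finset (Fin n → F) := Finset.univ.filter (fun c => c ∈ C ∧ hammingNorm c = w) with hA
  have hstep0 : ({c : Fin n → F | c ∈ C ∧ hammingNorm c = w}.ncard) = A.card := by
    rw [Set.ncard_eq_toFinset_card', Set.toFinset_setOf]
  have hstep1 : A.card = ∑ S ∈ Finset.powersetCard w (Finset.univ : Finset (Fin n)), (E S).card := by
    rw [Finset.card_eq_sum_card_fiberwise (f := suppF) (t := Finset.powersetCard w Finset.univ)
      (fun c hc => by
        simp only [hA, Finset.mem_coe, mem_filter] at hc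
        rw [Finset.mem_coe, Finset.mem_powersetCard_univ, ← hnorm c]
        exact hc.2.2)]
    refine Finset.sum_congr rfl fun S hS => ?_
    rw [Finset.mem_powersetCard_univ] at hS
    congr 1
    ext c
    simp only [hA, hE, Finset.mem_filter, mem_univ, true_and]
    constructor
    · tauto
    · rintro ⟨h1, h2⟩
      exact ⟨⟨h1, by rw [hnorm c, h2, hS]⟩, h2⟩
  -- Möbius
  have hstep2 : ∀ S ∈ Finset.powersetCard w (Finset.univ : Finset (Fin n)),
      ((E S).card : ℤ) = ∑ i ∈ range (w+1), (w.choose i : ℤ) * ((-1:ℤ)^(w-i) * (q:ℤ)^(i-(d-1))) := by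
    intro S hS
    rw [Finset.mem_powersetCard_univ] at hS
    rw [aux_mobius S (fun T => ((E T).card : ℤ)) (fun R => ((N R).card : ℤ))
      (fun R _ => by exact_mod_cast hNE R)]
    have hterm : ∀ R ∈ S.powerset, (-1:ℤ)^(S.card - R.card) * ((N R).card : ℤ)
        = (fun m => (-1:ℤ)^(w-m) * (q:ℤ)^(m-(d-1))) R.card := by
      intro R hR
      rw [hNcard R, hS]
    rw [Finset.sum_congr rfl hterm, Finset.sum_powerset_apply_card
      (fun m => (-1:ℤ)^(w-m) * (q:ℤ)^(m-(d-1))), hS]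
    refine Finset.sum_congr rfl fun i _ => ?_
    rw [nsmul_eq_mul]
  -- assemble
  rw [hstep0]
  push_cast [hstep1]
  rw [Finset.sum_congr rfl hstep2, Finset.sum_const, Finset.card_powersetCard, Finset.card_univ,
    Fintype.card_fin, nsmul_eq_mul]
  rw [show ∑ i ∈ range (w+1), (w.choose i : ℤ) * ((-1:ℤ)^(w-i) * (q:ℤ)^(i-(d-1)))
      = ∑ i ∈ range (w+1), (-1:ℤ)^(w-i) * (w.choose i : ℤ) * (q:ℤ)^(i-(d-1)) from
    Finset.sum_congr rfl fun i _ => by ring]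
  rw [aux_full w d (by omega) hw1 (q:ℤ)]
  ring
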